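/- Let n ≥ 1, let A = (a^{ij}) be a symmetric positive-definite n×n real matrix and b ∈ ℝⁿ. For y ∈ ℝⁿ set α(y) = √(yᵀAy), β(y) = bᵀy, Y(y) = Ay, and on the open region where 0 < α(y) < β(y) set F(y) = (1/2)·β(y)³/(β(y) − α(y)). Then on this region the Hessian of F is given by ∂²F/∂y_i∂y_j = [β³/(2α(β − α)²)]·a^{ij} + [(β³ − 3αβ² + 3α²β)/(β − α)³]·b^i b^j + [(β³ − 3αβ²)/(2α(β − α)³)]·(b^i Y^j + b^j Y^i) + [β³(3α − β)/(2α³(β − α)³)]·Y^i Y^j, with α, β, Y evaluated at y. -/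

import Mathlib

open Matrix

/-- Partial derivative of a function on `ℝⁿ` with respect to the `i`-th coordinate. -/
noncomputable def pder {n : ℕ} (i : Fin n) (F : (Fin n → ℝ) → ℝ) : (Fin n → ℝ) → ℝ :=
  fun y => deriv (fun t => F (Function.update y i t)) (y i)


lemma update_eq' {n : ℕ} (z : Fin n → ℝ) (i : Fin n) (t : ℝ) :
    Function.update z i t = z + (t - z i) • (Pi.single i 1 : Fin n → ℝ) := by
  funext k
  by_cases h : k = i
  · subst h; simp
  · simp [Function.update_of_ne h, Pi.single_eq_of_ne h]

lemma dot_mulVec_single' {n : ℕ} (A : Matrix (Fin n) (Fin n) ℝ) (hAsymm : A.IsSymm)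
    (z : Fin n → ℝ) (i : Fin n) :
    z ⬝ᵥ A.mulVec (Pi.single i 1) = A.mulVec z i := by
  rw [dotProduct_mulVec, ← mulVec_transpose, hAsymm.eq, dotProduct_single, mul_one]

lemma single_dot_mulVec' {n : ℕ} (A : Matrix (Fin n) (Fin n) ℝ)
    (z : Fin n → ℝ) (i : Fin n) :
    (Pi.single i 1 : Fin n → ℝ) ⬝ᵥ A.mulVec z = A.mulVec z i := by
  rw [single_dotProduct, one_mul]

lemma beta_upd' {n : ℕ} (b z : Fin n → ℝ) (i : Fin n) (t : ℝ) :
    b ⬝ᵥ Function.update z i t = b ⬝ᵥ z + b i * (t - z i) := by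
  rw [update_eq', dotProduct_add, dotProduct_smul, dotProduct_single, smul_eq_mul]
  ring

lemma mulVec_upd' {n : ℕ} (A : Matrix (Fin n) (Fin n) ℝ) (z : Fin n → ℝ) (i k : Fin n) (t : ℝ) :
    A.mulVec (Function.update z i t) k = A.mulVec z k + A k i * (t - z i) := by
  rw [update_eq', mulVec_add, mulVec_smul]
  simp [mulVec_single]
  ring

lemma phi_upd' {n : ℕ} (A : Matrix (Fin n) (Fin n) ℝ) (hAsymm : A.IsSymm)
    (z : Fin n → ℝ) (i : Fin n) (t : ℝ) :
    Function.update z i t ⬝ᵥ A.mulVec (Function.update z i t)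
      = z ⬝ᵥ A.mulVec z + 2 * A.mulVec z i * (t - z i) + A i i * (t - z i) ^ 2 := by
  rw [update_eq', mulVec_add, mulVec_smul, dotProduct_add, add_dotProduct,
    add_dotProduct, dotProduct_smul, dotProduct_smul, smul_dotProduct, smul_dotProduct,
    dot_mulVec_single' A hAsymm, single_dot_mulVec', smul_eq_mul, smul_eq_mul, smul_eq_mul,
    single_dot_mulVec', mulVec_single]
  simp only [smul_eq_mul, Pi.single_eq_same, mul_one, MulOpposite.op_one, one_smul, Matrix.col_apply]
  ring

lemma pder_first' {n : ℕ} (A : Matrix (Fin n) (Fin n) ℝ) (hAsymm : A.IsSymm)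
    (b : Fin n → ℝ) (i : Fin n) (z : Fin n → ℝ)
    (hz1 : 0 < z ⬝ᵥ A.mulVec z)
    (hz2 : Real.sqrt (z ⬝ᵥ A.mulVec z) < b ⬝ᵥ z) :
    pder i (fun w => (1 / 2 : ℝ) *
        ((b ⬝ᵥ w) ^ 3 / ((b ⬝ᵥ w) - Real.sqrt (w ⬝ᵥ A.mulVec w)))) z
      = 1 / 2 * ((3 * (b ⬝ᵥ z) ^ 2 * b i * ((b ⬝ᵥ z) - Real.sqrt (z ⬝ᵥ A.mulVec z))
          - (b ⬝ᵥ z) ^ 3 * (b i - A.mulVec z i / Real.sqrt (z ⬝ᵥ A.mulVec z)))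
          / ((b ⬝ᵥ z) - Real.sqrt (z ⬝ᵥ A.mulVec z)) ^ 2) := by
  set ph := z ⬝ᵥ A.mulVec z with hph
  set be := b ⬝ᵥ z with hbe
  set c := A.mulVec z i with hc
  set al := Real.sqrt ph with hal
  have hal0 : 0 < al := Real.sqrt_pos.mpr hz1
  have hden : be - al ≠ 0 := ne_of_gt (sub_pos.mpr hz2)
  have hfun : (fun t => (fun w => (1 / 2 : ℝ) *
        ((b ⬝ᵥ w) ^ 3 / ((b ⬝ᵥ w) - Real.sqrt (w ⬝ᵥ A.mulVec w)))) (Function.update z i t))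
      = fun t => (1 / 2 : ℝ) * ((be + b i * (t - z i)) ^ 3 /
          ((be + b i * (t - z i)) -
            Real.sqrt (ph + 2 * c * (t - z i) + A i i * (t - z i) ^ 2))) := by
    funext t
    simp only [beta_upd' b z i t, phi_upd' A hAsymm z i t]; rfl
  rw [pder, hfun]
  have h1 : HasDerivAt (fun t : ℝ => t - z i) 1 (z i) := (hasDerivAt_id _).sub_const _
  have hB : HasDerivAt (fun t : ℝ => be + b i * (t - z i)) (b i) (z i) := by
    simpa using (h1.const_mul (b i)).const_add be
  have hP : HasDerivAt (fun t : ℝ => ph + 2 * c * (t - z i) + A i i * (t - z i) ^ 2)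
      (2 * c) (z i) := by
    have := ((h1.const_mul (2 * c)).const_add ph).fun_add ((h1.fun_pow 2).const_mul (A i i))
    exact this.congr_deriv (by simp)
  have hPz : ph + 2 * c * (z i - z i) + A i i * (z i - z i) ^ 2 = ph := by ring
  have hsq : HasDerivAt (fun t : ℝ =>
      Real.sqrt (ph + 2 * c * (t - z i) + A i i * (t - z i) ^ 2)) (c / al) (z i) := by
    have := hP.sqrt (by rw [hPz]; exact hz1.ne')
    convert this using 1
    rw [hPz, ← hal]
    field_simp
  have hD : HasDerivAt (fun t : ℝ => (be + b i * (t - z i)) -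
      Real.sqrt (ph + 2 * c * (t - z i) + A i i * (t - z i) ^ 2)) (b i - c / al) (z i) :=
    hB.sub hsq
  have hDz : (be + b i * (z i - z i)) -
      Real.sqrt (ph + 2 * c * (z i - z i) + A i i * (z i - z i) ^ 2) = be - al := by
    rw [hPz]; ring
  have hN : HasDerivAt (fun t : ℝ => (be + b i * (t - z i)) ^ 3)
      (3 * be ^ 2 * b i) (z i) := by
    have := hB.fun_pow 3
    exact this.congr_deriv (by simp)
  have hQ := hN.fun_div hD (by rw [hDz]; exact hden)
  have hF := hQ.const_mul (1 / 2 : ℝ)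
  have hBz : be + b i * (z i - z i) = be := by ring
  rw [hF.deriv]
  simp only [hPz, hBz]; rfl

set_option maxHeartbeats 2000000 in
/-- The fundamental tensor (Hessian of `F = (1/2)·β³/(β − α)`) of the Cartan space
with deformed infinite series metric `H(α, β) = β³/(β − α)`. -/
theorem fundamental_tensor_deformed_infinite_series_one_form
    (n : ℕ) (hn : 1 ≤ n)
    (A : Matrix (Fin n) (Fin n) ℝ) (hA : A.PosDef) (hAsymm : A.IsSymm)
    (b : Fin n → ℝ)
    (y : Fin n → ℝ)
    (hy1 : 0 < Real.sqrt (y ⬝ᵥ A.mulVec y))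
    (hy2 : Real.sqrt (y ⬝ᵥ A.mulVec y) < b ⬝ᵥ y) :
    ∀ i j : Fin n,
      let al := Real.sqrt (y ⬝ᵥ A.mulVec y)
      let be := b ⬝ᵥ y
      let Y := A.mulVec y
      pder j (pder i (fun z => (1 / 2) *
          ((b ⬝ᵥ z) ^ 3 / ((b ⬝ᵥ z) - Real.sqrt (z ⬝ᵥ A.mulVec z))))) y =
        (be ^ 3 / (2 * al * (be - al) ^ 2)) * A i j
          + ((be ^ 3 - 3 * al * be ^ 2 + 3 * al ^ 2 * be) / (be - al) ^ 3) * b i * b j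
          + ((be ^ 3 - 3 * al * be ^ 2) / (2 * al * (be - al) ^ 3))
              * (b i * Y j + b j * Y i)
          + (be ^ 3 * (3 * al - be) / (2 * al ^ 3 * (be - al) ^ 3)) * Y i * Y j := by
  intro i j
  intro al be Y
  have hal : al = Real.sqrt (y ⬝ᵥ A.mulVec y) := rfl
  have hbe : be = b ⬝ᵥ y := rfl
  have hY : Y = A.mulVec y := rfl
  rw [hal, hbe, hY]
  have hph0 : 0 < y ⬝ᵥ A.mulVec y := Real.sqrt_pos.mp hy1
  set ph := y ⬝ᵥ A.mulVec y with hph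
  set beta := b ⬝ᵥ y with hbeta
  set Yi := A.mulVec y i with hYi
  set Yj := A.mulVec y j with hYj
  set aij := A i j with haij
  have halp0 : 0 < Real.sqrt ph := hy1
  have hden : beta - Real.sqrt ph ≠ 0 := ne_of_gt (sub_pos.mpr hy2)
  -- outer derivative
  show deriv (fun t => pder i (fun z => (1 / 2 : ℝ) *
      ((b ⬝ᵥ z) ^ 3 / ((b ⬝ᵥ z) - Real.sqrt (z ⬝ᵥ A.mulVec z)))) (Function.update y j t)) (y j) = _
  -- eventual equality with the explicit formula
  have hev : (fun t => pder i (fun z => (1 / 2 : ℝ) *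
        ((b ⬝ᵥ z) ^ 3 / ((b ⬝ᵥ z) - Real.sqrt (z ⬝ᵥ A.mulVec z)))) (Function.update y j t))
      =ᶠ[nhds (y j)] fun t =>
        1 / 2 * ((3 * (beta + b j * (t - y j)) ^ 2 * b i *
            ((beta + b j * (t - y j)) -
              Real.sqrt (ph + 2 * Yj * (t - y j) + A j j * (t - y j) ^ 2))
          - (beta + b j * (t - y j)) ^ 3 * (b i - (Yi + aij * (t - y j)) /
              Real.sqrt (ph + 2 * Yj * (t - y j) + A j j * (t - y j) ^ 2)))
          / ((beta + b j * (t - y j)) -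
              Real.sqrt (ph + 2 * Yj * (t - y j) + A j j * (t - y j) ^ 2)) ^ 2) := by
    have hPc : ContinuousAt (fun t : ℝ => ph + 2 * Yj * (t - y j) + A j j * (t - y j) ^ 2) (y j) := by
      fun_prop
    have hBc : ContinuousAt (fun t : ℝ => beta + b j * (t - y j)) (y j) := by fun_prop
    have hPy : ph + 2 * Yj * (y j - y j) + A j j * (y j - y j) ^ 2 = ph := by ring
    have hBy : beta + b j * (y j - y j) = beta := by ring
    have h1 : ∀ᶠ t in nhds (y j),
        0 < ph + 2 * Yj * (t - y j) + A j j * (t - y j) ^ 2 :=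
      (continuousAt_const.eventually_lt hPc (by rw [hPy]; exact hph0))
    have h2 : ∀ᶠ t in nhds (y j),
        Real.sqrt (ph + 2 * Yj * (t - y j) + A j j * (t - y j) ^ 2)
          < beta + b j * (t - y j) :=
      ((Real.continuous_sqrt.continuousAt.comp hPc).eventually_lt hBc
        (by rw [Function.comp]; rw [hPy, hBy]; exact hy2))
    filter_upwards [h1, h2] with t ht1 ht2
    have e1 : Function.update y j t ⬝ᵥ A.mulVec (Function.update y j t)
        = ph + 2 * Yj * (t - y j) + A j j * (t - y j) ^ 2 := phi_upd' A hAsymm y j t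
    have e2 : b ⬝ᵥ Function.update y j t = beta + b j * (t - y j) := beta_upd' b y j t
    have e3 : A.mulVec (Function.update y j t) i = Yi + aij * (t - y j) := mulVec_upd' A y j i t
    rw [pder_first' A hAsymm b i _ (by rw [e1]; exact ht1) (by rw [e1, e2]; exact ht2),
      e1, e2, e3]
  rw [hev.deriv_eq]
  -- now compute the derivative of the explicit formula
  have h1 : HasDerivAt (fun t : ℝ => t - y j) 1 (y j) := (hasDerivAt_id _).sub_const _
  have hB : HasDerivAt (fun t : ℝ => beta + b j * (t - y j)) (b j) (y j) := by
    simpa using (h1.const_mul (b j)).const_add beta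
  have hP : HasDerivAt (fun t : ℝ => ph + 2 * Yj * (t - y j) + A j j * (t - y j) ^ 2)
      (2 * Yj) (y j) := by
    have := ((h1.const_mul (2 * Yj)).const_add ph).fun_add ((h1.fun_pow 2).const_mul (A j j))
    exact this.congr_deriv (by simp)
  have hPy : ph + 2 * Yj * (y j - y j) + A j j * (y j - y j) ^ 2 = ph := by ring
  have hBy : beta + b j * (y j - y j) = beta := by ring
  have hCy : Yi + aij * (y j - y j) = Yi := by ring
  have ha : HasDerivAt (fun t : ℝ =>
      Real.sqrt (ph + 2 * Yj * (t - y j) + A j j * (t - y j) ^ 2)) (Yj / Real.sqrt ph) (y j) := by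
    have := hP.sqrt (by rw [hPy]; exact hph0.ne')
    convert this using 1
    rw [hPy]
    field_simp
  have hay : Real.sqrt (ph + 2 * Yj * (y j - y j) + A j j * (y j - y j) ^ 2) = Real.sqrt ph := by
    rw [hPy]
  have hC : HasDerivAt (fun t : ℝ => Yi + aij * (t - y j)) aij (y j) := by
    simpa using (h1.const_mul aij).const_add Yi
  have hBa : HasDerivAt (fun t : ℝ => (beta + b j * (t - y j)) -
      Real.sqrt (ph + 2 * Yj * (t - y j) + A j j * (t - y j) ^ 2)) (b j - Yj / Real.sqrt ph) (y j) :=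
    hB.sub ha
  have hB2 := hB.fun_pow 2
  have hB3 := hB.fun_pow 3
  have hn1 := ((hB2.const_mul 3).mul_const (b i)).fun_mul hBa
  have haney : (fun t : ℝ => Real.sqrt (ph + 2 * Yj * (t - y j) + A j j * (t - y j) ^ 2)) (y j) ≠ 0 := by
    simp only [hay]
    exact halp0.ne'
  have hq1 := hC.fun_div ha haney
  have hq2 := hq1.const_sub (b i)
  have hn2 := hB3.fun_mul hq2
  have hnum := hn1.fun_sub hn2
  have hdd := hBa.fun_pow 2
  have hdeny : ((fun t : ℝ => (beta + b j * (t - y j)) -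
      Real.sqrt (ph + 2 * Yj * (t - y j) + A j j * (t - y j) ^ 2)) (y j)) ≠ 0 := by
    simp only [hay, hBy]
    exact hden
  have hq := hnum.fun_div hdd (by simpa only [hay, hBy] using pow_ne_zero 2 hdeny)
  have hfin := hq.const_mul (1 / 2 : ℝ)
  rw [hfin.deriv]
  simp only [hPy, hBy, hCy, hay]
  obtain ⟨a, ha0, hba, haeq⟩ : ∃ a : ℝ, 0 < a ∧ a < beta ∧ Real.sqrt ph = a :=
    ⟨_, halp0, hy2, rfl⟩
  rw [haeq]
  have hane : a ≠ 0 := ha0.ne'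
  have hbane : beta - a ≠ 0 := ne_of_gt (sub_pos.mpr hba)
  field_simp
  ring
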